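/- Let A be a symmetric d×d matrix with ‖A‖₂ ≤ L where L ≥ 0. Then the symmetric 2d×2d block matrix M := [[2I_d, 2I_d − A],[2I_d − A, (6 + 4L²)I_d − 2A]] satisfies M ⪰ (1/2) I_{2d}, i.e. M − (1/2)I_{2d} is positive semidefinite. -/

import Mathlib

open Matrix

private lemma norm_symm_eq (d : ℕ) (u : Fin d → ℝ) :
    ‖(WithLp.equiv 2 (Fin d → ℝ)).symm u‖ = Real.sqrt (u ⬝ᵥ u) := by
  rw [norm_eq_sqrt_real_inner, WithLp.equiv_symm_apply, EuclideanSpace.inner_toLp_toLp]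
  simp

private lemma cs_dot (d : ℕ) (u v : Fin d → ℝ) :
    |u ⬝ᵥ v| ≤ Real.sqrt (u ⬝ᵥ u) * Real.sqrt (v ⬝ᵥ v) := by
  have h := abs_real_inner_le_norm ((WithLp.equiv 2 (Fin d → ℝ)).symm u)
      ((WithLp.equiv 2 (Fin d → ℝ)).symm v)
  rw [show inner ℝ ((WithLp.equiv 2 (Fin d → ℝ)).symm u) ((WithLp.equiv 2 (Fin d → ℝ)).symm v) = u ⬝ᵥ v from
      (EuclideanSpace.inner_toLp_toLp u v).trans (by rw [star_trivial, dotProduct_comm]),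
    norm_symm_eq, norm_symm_eq] at h
  simpa using h

theorem block_matrix_lower_bound
    (d : ℕ) (L : ℝ) (hL : 0 ≤ L)
    (A : Matrix (Fin d) (Fin d) ℝ) (hA : A.IsSymm)
    (hbound : ∀ x : EuclideanSpace ℝ (Fin d), ‖Matrix.toEuclideanLin A x‖ ≤ L * ‖x‖) :
    (Matrix.fromBlocks
        ((2 : ℝ) • (1 : Matrix (Fin d) (Fin d) ℝ))
        ((2 : ℝ) • 1 - A)
        ((2 : ℝ) • 1 - A)
        ((6 + 4 * L ^ 2) • (1 : Matrix (Fin d) (Fin d) ℝ) - (2 : ℝ) • A)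
      - (1 / 2 : ℝ) • (1 : Matrix (Fin d ⊕ Fin d) (Fin d ⊕ Fin d) ℝ)).PosSemidef := by
  -- norm bound in dotProduct form
  have hAnorm : ∀ v : Fin d → ℝ,
      Real.sqrt ((A *ᵥ v) ⬝ᵥ (A *ᵥ v)) ≤ L * Real.sqrt (v ⬝ᵥ v) := by
    intro v
    have h := hbound ((WithLp.equiv 2 (Fin d → ℝ)).symm v)
    rw [WithLp.equiv_symm_apply, Matrix.toEuclideanLin_apply_piLp_toLp, ← WithLp.equiv_symm_apply, norm_symm_eq, norm_symm_eq] at h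
    exact h
  have hAbound : ∀ u v : Fin d → ℝ,
      |u ⬝ᵥ (A *ᵥ v)| ≤ L * (Real.sqrt (u ⬝ᵥ u) * Real.sqrt (v ⬝ᵥ v)) := by
    intro u v
    calc |u ⬝ᵥ (A *ᵥ v)| ≤ Real.sqrt (u ⬝ᵥ u) * Real.sqrt ((A *ᵥ v) ⬝ᵥ (A *ᵥ v)) :=
          cs_dot d u (A *ᵥ v)
      _ ≤ Real.sqrt (u ⬝ᵥ u) * (L * Real.sqrt (v ⬝ᵥ v)) := by
          exact mul_le_mul_of_nonneg_left (hAnorm v) (Real.sqrt_nonneg _)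
      _ = L * (Real.sqrt (u ⬝ᵥ u) * Real.sqrt (v ⬝ᵥ v)) := by ring
  rw [Matrix.posSemidef_iff_dotProduct_mulVec]
  constructor
  · rw [Matrix.IsHermitian, Matrix.conjTranspose_eq_transpose_of_trivial]
    simp [Matrix.transpose_sub, Matrix.fromBlocks_transpose, Matrix.transpose_smul, hA.eq]
  · intro z
    have hz : z = Sum.elim (z ∘ Sum.inl) (z ∘ Sum.inr) := by
      funext i; cases i <;> rfl
    set x := z ∘ Sum.inl with hx
    set y := z ∘ Sum.inr with hy
    rw [hz]
    simp only [star_trivial, Matrix.sub_mulVec, Matrix.smul_mulVec,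
      Matrix.one_mulVec, Matrix.fromBlocks_mulVec, sumElim_dotProduct_sumElim,
      dotProduct_add, dotProduct_sub, dotProduct_smul,
      Sum.elim_comp_inl, Sum.elim_comp_inr, smul_eq_mul]
    have hsymm : y ⬝ᵥ A *ᵥ x = x ⬝ᵥ A *ᵥ y := by
      rw [Matrix.dotProduct_mulVec, ← Matrix.mulVec_transpose, hA.eq, dotProduct_comm]
    set a := Real.sqrt (x ⬝ᵥ x) with ha
    set b := Real.sqrt (y ⬝ᵥ y) with hb
    have hxs : (0:ℝ) ≤ x ⬝ᵥ x := Finset.sum_nonneg fun i _ => mul_self_nonneg _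
    have hys : (0:ℝ) ≤ y ⬝ᵥ y := Finset.sum_nonneg fun i _ => mul_self_nonneg _
    have ha2 : a ^ 2 = x ⬝ᵥ x := Real.sq_sqrt hxs
    have hb2 : b ^ 2 = y ⬝ᵥ y := Real.sq_sqrt hys
    have h1 : |x ⬝ᵥ y| ≤ a * b := cs_dot d x y
    have h2 : |x ⬝ᵥ A *ᵥ y| ≤ L * (a * b) := hAbound x y
    have h3 : |y ⬝ᵥ A *ᵥ y| ≤ L * (b * b) := hAbound y y
    have h1' := neg_le_of_abs_le h1
    have h2l := neg_le_of_abs_le h2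
    have h2r := le_of_abs_le h2
    have h3r := le_of_abs_le h3
    have hbb : b * b = y ⬝ᵥ y := Real.mul_self_sqrt hys
    have hyx : y ⬝ᵥ x = x ⬝ᵥ y := dotProduct_comm _ _
    rw [hsymm, hyx, ← ha2, ← hb2]
    nlinarith [sq_nonneg (3*a - (4+2*L)*b), sq_nonneg (10*L*b - 7*b), sq_nonneg b, sq_nonneg a]
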